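/- Let p be prime, m ≥ 1, a ∈ ℚ_p nonzero with ord_p(a) = k. Then for all sufficiently large i ≥ 1, the circle C(0, p^{-i}) = p^i ℤ_p^× is partitioned into exactly p^{im+k−1}(p−1) distinct ℤ_p-orbits of the map f_{m+1,a}, where each ℤ_p-orbit is a coset x + a x^{m+1} ℤ_p. -/

import Mathlib

/-- The collection of `ℤ_p`-orbits `x + a x^{m+1} ℤ_p` of the flow `f_{m+1,a}`
with base point on the circle `C(0, p^{-i})`. -/
def orbitFamily (p : ℕ) [Fact p.Prime] (m : ℕ) (a : ℚ_[p]) (i : ℕ) : Set (Set ℚ_[p]) :=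
  {s | ∃ x : ℚ_[p], ‖x‖ = (p : ℝ) ^ (-(i : ℤ)) ∧
    s = {y | ∃ c : ℤ_[p], y = x + a * x ^ (m + 1) * (c : ℚ_[p])}}

section aux

variable {p : ℕ} [hp : Fact p.Prime]

/-- Two closed balls of the same radius with close centers coincide (ultrametric). -/
private lemma ball_eq_of_close {x x' : ℚ_[p]} {r : ℝ} (h : ‖x - x'‖ ≤ r) :
    {y : ℚ_[p] | ‖y - x‖ ≤ r} = {y : ℚ_[p] | ‖y - x'‖ ≤ r} := by
  have key : ∀ u v : ℚ_[p], ‖u - v‖ ≤ r → ∀ y : ℚ_[p], ‖y - u‖ ≤ r → ‖y - v‖ ≤ r := by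
    intro u v huv y hy
    have : y - v = (y - u) + (u - v) := by ring
    rw [this]
    exact le_trans (Padic.nonarchimedean _ _) (max_le hy huv)
  ext y
  constructor
  · exact key x x' h y
  · exact key x' x (by rwa [norm_sub_rev]) y

/-- The orbit `x + a x^{m+1} ℤ_p` is the closed ball of radius `p^{-(i(m+1)+k)}`. -/
private lemma orbit_eq (m : ℕ) (a : ℚ_[p]) (ha : a ≠ 0) (k i : ℕ)
    (hk : ‖a‖ = (p : ℝ) ^ (-(k : ℤ))) {x : ℚ_[p]} (hx : ‖x‖ = (p : ℝ) ^ (-(i : ℤ))) :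
    {y : ℚ_[p] | ∃ c : ℤ_[p], y = x + a * x ^ (m + 1) * (c : ℚ_[p])}
      = {y : ℚ_[p] | ‖y - x‖ ≤ (p : ℝ) ^ (-((i * (m + 1) + k : ℕ) : ℤ))} := by
  have hp0 : (0 : ℝ) < p := mod_cast hp.out.pos
  have hxne : x ≠ 0 := by
    intro h
    rw [h, norm_zero] at hx
    exact absurd hx.symm (ne_of_gt (zpow_pos hp0 _))
  have hw : ‖a * x ^ (m + 1)‖ = (p : ℝ) ^ (-((i * (m + 1) + k : ℕ) : ℤ)) := by
    rw [norm_mul, norm_pow, hk, hx, ← zpow_natCast ((p : ℝ) ^ (-(i : ℤ))) (m + 1),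
      ← zpow_mul, ← zpow_add₀ (ne_of_gt hp0)]
    congr 1
    push_cast
    ring
  have hwne : a * x ^ (m + 1) ≠ 0 := mul_ne_zero ha (pow_ne_zero _ hxne)
  ext y
  simp only [Set.mem_setOf_eq]
  constructor
  · rintro ⟨c, rfl⟩
    rw [add_sub_cancel_left, norm_mul, hw]
    exact mul_le_of_le_one_right (le_of_lt (zpow_pos hp0 _)) c.2
  · intro hy
    have hc : ‖(y - x) / (a * x ^ (m + 1))‖ ≤ 1 := by
      rw [norm_div, hw]
      exact div_le_one_of_le₀ hy (le_of_lt (zpow_pos hp0 _))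
    refine ⟨⟨(y - x) / (a * x ^ (m + 1)), hc⟩, ?_⟩
    show y = x + a * x ^ (m + 1) * ((y - x) / (a * x ^ (m + 1)))
    field_simp
    ring

private lemma norm_eq_one_of_isUnit_toZModPow {n : ℕ} (hn : 1 ≤ n) {z : ℤ_[p]}
    (h : IsUnit (PadicInt.toZModPow n z)) : ‖z‖ = 1 := by
  haveI : Fact (1 < p ^ n) := ⟨Nat.one_lt_pow (by omega) hp.out.one_lt⟩
  by_contra hz
  have hz1 : ¬IsUnit z := by rwa [PadicInt.isUnit_iff]
  rw [PadicInt.not_isUnit_iff, PadicInt.norm_lt_one_iff_dvd] at hz1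
  obtain ⟨w, rfl⟩ := hz1
  rw [map_mul, map_natCast] at h
  have hpu : IsUnit ((p : ZMod (p ^ n))) := isUnit_of_mul_isUnit_left h
  have hnil : ((p : ZMod (p ^ n))) ^ n = 0 := by
    rw [← Nat.cast_pow, ZMod.natCast_self]
  have : IsUnit ((0 : ZMod (p ^ n))) := hnil ▸ hpu.pow n
  rw [isUnit_zero_iff] at this
  exact zero_ne_one this

private lemma toZModPow_surj (n : ℕ) :
    Function.Surjective (PadicInt.toZModPow (p := p) n) := by
  haveI : NeZero (p ^ n) := ⟨pow_ne_zero n hp.out.ne_zero⟩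
  intro z
  refine ⟨(z.val : ℤ_[p]), ?_⟩
  rw [map_natCast, ZMod.natCast_val, ZMod.cast_id]

private lemma congr_iff (n : ℕ) (z z' : ℤ_[p]) :
    ‖z - z'‖ ≤ (p : ℝ) ^ (-(n : ℤ)) ↔
      PadicInt.toZModPow n z = PadicInt.toZModPow n z' := by
  rw [← sub_eq_zero, ← map_sub, ← RingHom.mem_ker, PadicInt.ker_toZModPow,
    ← PadicInt.norm_le_pow_iff_mem_span_pow]

end aux

/-- if `ord_p(a) = k`, then for all sufficiently large `i ≥ 1`, the
circle `C(0, p^{-i}) = p^i ℤ_p^×` is partitioned into exactly `p^{im+k-1}(p-1)`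
distinct `ℤ_p`-orbits of `f_{m+1,a}`, each orbit being a coset `x + a x^{m+1} ℤ_p`. -/
theorem stmt6 {p : ℕ} [Fact p.Prime] (m : ℕ) (hm : 1 ≤ m)
    (a : ℚ_[p]) (ha : a ≠ 0) (k : ℕ) (hk : ‖a‖ = (p : ℝ) ^ (-(k : ℤ))) :
    ∃ i₀ : ℕ, 1 ≤ i₀ ∧ ∀ i ≥ i₀,
      (⋃₀ orbitFamily p m a i = {y : ℚ_[p] | ‖y‖ = (p : ℝ) ^ (-(i : ℤ))}) ∧
      (∀ s ∈ orbitFamily p m a i, ∀ t ∈ orbitFamily p m a i, s ≠ t → Disjoint s t) ∧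
      Nat.card (orbitFamily p m a i) = p ^ (i * m + k - 1) * (p - 1) := by
  haveI hp : Fact p.Prime := ‹_›
  refine ⟨1, le_refl 1, fun i hi => ?_⟩
  have hp0 : (0 : ℝ) < p := mod_cast hp.out.pos
  have hp1 : (1 : ℝ) < p := mod_cast hp.out.one_lt
  have him : 1 ≤ i * m := Nat.one_le_iff_ne_zero.mpr (by positivity)
  set N : ℕ := i * (m + 1) + k with hN
  set n : ℕ := i * m + k with hn
  have hNn : N = n + i := by rw [hN, hn]; ring
  have hn1 : 1 ≤ n := by omega
  have hiN : i < N := by omega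
  refine ⟨?_, ?_, ?_⟩
  · -- union is the circle
    ext y
    simp only [Set.mem_sUnion, Set.mem_setOf_eq]
    constructor
    · rintro ⟨s, ⟨x, hx, rfl⟩, hy⟩
      rw [orbit_eq m a ha k i hk hx] at hy
      simp only [Set.mem_setOf_eq] at hy
      have hlt : (p : ℝ) ^ (-(N : ℤ)) < (p : ℝ) ^ (-(i : ℤ)) := by
        apply zpow_lt_zpow_right₀ hp1
        omega
      have h1 : ‖y - x‖ < ‖x‖ := lt_of_le_of_lt hy (by rw [hx]; exact hlt)
      have h2 : ‖y‖ = ‖x‖ := by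
        have h3 : y = (y - x) + x := by ring
        rw [h3, Padic.add_eq_max_of_ne (ne_of_lt h1), max_eq_right (le_of_lt h1)]
      rw [h2, hx]
    · intro hy
      exact ⟨_, ⟨y, hy, rfl⟩, ⟨0, by simp⟩⟩
  · -- disjointness
    rintro s ⟨x, hx, rfl⟩ t ⟨x', hx', rfl⟩ hst
    rw [orbit_eq m a ha k i hk hx, orbit_eq m a ha k i hk hx'] at hst ⊢
    rw [Set.disjoint_left]
    intro y hy hy'
    simp only [Set.mem_setOf_eq] at hy hy'
    apply hst
    apply ball_eq_of_close
    have h1 : x - x' = -(y - x) + (y - x') := by ring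
    rw [h1]
    exact le_trans (Padic.nonarchimedean _ _) (max_le (by rwa [norm_neg]) hy')
  · -- cardinality
    haveI : Fact (1 < p ^ n) := ⟨Nat.one_lt_pow (by omega) hp.out.one_lt⟩
    choose g hg using toZModPow_surj (p := p) n
    have hgnorm : ∀ u : (ZMod (p ^ n))ˣ, ‖g (u : ZMod (p ^ n))‖ = 1 := fun u =>
      norm_eq_one_of_isUnit_toZModPow hn1 (by rw [hg]; exact u.isUnit)
    set X : (ZMod (p ^ n))ˣ → ℚ_[p] :=
      fun u => (p : ℚ_[p]) ^ i * ((g (u : ZMod (p ^ n)) : ℤ_[p]) : ℚ_[p]) with hX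
    have hXnorm : ∀ u, ‖X u‖ = (p : ℝ) ^ (-(i : ℤ)) := by
      intro u
      rw [hX]
      simp only
      rw [norm_mul, Padic.norm_p_pow, PadicInt.padic_norm_e_of_padicInt, hgnorm, mul_one]
    have hNsplit : (p : ℝ) ^ (-(N : ℤ)) = (p : ℝ) ^ (-(i : ℤ)) * (p : ℝ) ^ (-(n : ℤ)) := by
      rw [← zpow_add₀ (ne_of_gt hp0)]
      congr 1
      omega
    -- close centers from congruent units
    have hclose : ∀ (u : (ZMod (p ^ n))ˣ) (z : ℤ_[p]),
        PadicInt.toZModPow n (g (u : ZMod (p ^ n))) = PadicInt.toZModPow n z →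
        ‖X u - (p : ℚ_[p]) ^ i * (z : ℚ_[p])‖ ≤ (p : ℝ) ^ (-(N : ℤ)) := by
      intro u z hcong
      have h1 : ‖g (u : ZMod (p ^ n)) - z‖ ≤ (p : ℝ) ^ (-(n : ℤ)) := (congr_iff n _ _).mpr hcong
      have h2 : X u - (p : ℚ_[p]) ^ i * (z : ℚ_[p])
          = (p : ℚ_[p]) ^ i * ((g (u : ZMod (p ^ n)) - z : ℤ_[p]) : ℚ_[p]) := by
        rw [hX]
        push_cast
        ring
      rw [h2, norm_mul, Padic.norm_p_pow, PadicInt.padic_norm_e_of_padicInt, hNsplit]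
      exact mul_le_mul_of_nonneg_left h1 (le_of_lt (zpow_pos hp0 _))
    set F : (ZMod (p ^ n))ˣ → ↥(orbitFamily p m a i) := fun u =>
      ⟨{y | ∃ c : ℤ_[p], y = X u + a * (X u) ^ (m + 1) * (c : ℚ_[p])},
        ⟨X u, hXnorm u, rfl⟩⟩ with hF
    have hbij : Function.Bijective F := by
      constructor
      · intro u u' huu
        have hset : {y : ℚ_[p] | ∃ c : ℤ_[p], y = X u + a * (X u) ^ (m + 1) * (c : ℚ_[p])}
            = {y : ℚ_[p] | ∃ c : ℤ_[p], y = X u' + a * (X u') ^ (m + 1) * (c : ℚ_[p])} :=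
          congrArg Subtype.val huu
        have hmem : X u' ∈ {y : ℚ_[p] | ∃ c : ℤ_[p], y = X u + a * (X u) ^ (m + 1) * (c : ℚ_[p])} := by
          rw [hset]; exact ⟨0, by simp⟩
        rw [orbit_eq m a ha k i hk (hXnorm u)] at hmem
        simp only [Set.mem_setOf_eq] at hmem
        have hdiff : X u' - X u = (p : ℚ_[p]) ^ i *
            ((g (u' : ZMod (p ^ n)) - g (u : ZMod (p ^ n)) : ℤ_[p]) : ℚ_[p]) := by
          rw [hX]; push_cast; ring
        rw [hdiff, norm_mul, Padic.norm_p_pow, PadicInt.padic_norm_e_of_padicInt,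
          hNsplit] at hmem
        have h1 : ‖g (u' : ZMod (p ^ n)) - g (u : ZMod (p ^ n))‖ ≤ (p : ℝ) ^ (-(n : ℤ)) :=
          le_of_mul_le_mul_left hmem (zpow_pos hp0 _)
        have h2 := (congr_iff n _ _).mp h1
        rw [hg, hg] at h2
        exact (Units.ext h2).symm
      · rintro ⟨s, x, hx, rfl⟩
        have hxne : x ≠ 0 := by
          intro h
          rw [h, norm_zero] at hx
          exact absurd hx.symm (ne_of_gt (zpow_pos hp0 _))
        have hpine : ((p : ℚ_[p]) ^ i) ≠ 0 := by
          apply pow_ne_zero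
          exact_mod_cast hp.out.ne_zero ∘ (by exact_mod_cast ·)
        have hznorm : ‖x / (p : ℚ_[p]) ^ i‖ = 1 := by
          rw [norm_div, Padic.norm_p_pow, hx, div_self (ne_of_gt (zpow_pos hp0 _))]
        set z : ℤ_[p] := ⟨x / (p : ℚ_[p]) ^ i, le_of_eq hznorm⟩ with hz
        have hzu : IsUnit (PadicInt.toZModPow n z) := by
          apply IsUnit.map
          rw [PadicInt.isUnit_iff]
          exact hznorm
        refine ⟨hzu.unit, ?_⟩
        apply Subtype.ext
        show {y : ℚ_[p] | ∃ c : ℤ_[p], y = X hzu.unit + a * (X hzu.unit) ^ (m + 1) * (c : ℚ_[p])}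
          = {y : ℚ_[p] | ∃ c : ℤ_[p], y = x + a * x ^ (m + 1) * (c : ℚ_[p])}
        have hxz : x = (p : ℚ_[p]) ^ i * (z : ℚ_[p]) := by
          rw [hz]
          show x = (p : ℚ_[p]) ^ i * (x / (p : ℚ_[p]) ^ i)
          field_simp
        rw [orbit_eq m a ha k i hk (hXnorm hzu.unit), orbit_eq m a ha k i hk hx]
        apply ball_eq_of_close
        rw [hxz]
        apply hclose
        rw [hg, IsUnit.unit_spec]
    rw [← Nat.card_eq_of_bijective F hbij, Nat.card_eq_fintype_card,
      ZMod.card_units_eq_totient, Nat.totient_prime_pow hp.out (by omega)]
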